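/- Let S be a finite type and P : S → S → ℝ a row-stochastic matrix (all entries nonnegative and each row sums to 1). Let the edge relation have an edge from s to t iff P s t > 0, let G ⊆ S, and let Z = {s | no element of G is reachable from s}. Then there exists a unique function x : S → ℝ such that x s = 1 for all s ∈ G, x s = 0 for all s ∈ Z, and x s = ∑_{t ∈ S} P s t * x t for all s ∉ G ∪ Z. -/

import Mathlib

open Classical Finset

/-- Maximum principle: a homogeneous solution is ≤ 0 everywhere. -/
private lemma mc_max_principle {S : Type*} [Fintype S]
    (P : S → S → ℝ) (hP0 : ∀ s t, 0 ≤ P s t) (hP1 : ∀ s, ∑ t, P s t = 1)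
    (G : Set S) (y : S → ℝ)
    (hGy : ∀ s ∈ G, y s = 0)
    (hZy : ∀ s ∈ {u | ∀ g ∈ G, ¬ Relation.ReflTransGen (fun a b => 0 < P a b) u g}, y s = 0)
    (heq : ∀ s ∉ G ∪ {u | ∀ g ∈ G, ¬ Relation.ReflTransGen (fun a b => 0 < P a b) u g},
      y s = ∑ t, P s t * y t) :
    ∀ s, y s ≤ 0 := by
  by_contra h
  push_neg at h
  obtain ⟨s1, hs1⟩ := h
  obtain ⟨s0, -, hmax⟩ := Finset.exists_max_image Finset.univ y ⟨s1, mem_univ _⟩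
  have hs0pos : 0 < y s0 := lt_of_lt_of_le hs1 (hmax s1 (mem_univ _))
  have key : ∀ v, Relation.ReflTransGen (fun a b => 0 < P a b) s0 v → y v = y s0 := by
    intro v h
    induction h with
    | refl => rfl
    | @tail b c h' hstep ih =>
      have hyb : y b = y s0 := ih
      have hbpos : 0 < y b := hyb ▸ hs0pos
      have hbG : b ∉ G := fun hb => by simp [hGy b hb] at hbpos
      have hbZ : b ∉ {u | ∀ g ∈ G, ¬ Relation.ReflTransGen (fun a b => 0 < P a b) u g} :=
        fun hb => by simp [hZy b hb] at hbpos
      have heqb := heq b (by simp [hbG, hbZ])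
      have hsum : ∑ t, P b t * (y s0 - y t) = 0 := by
        have : ∑ t, P b t * (y s0 - y t)
            = (∑ t, P b t) * y s0 - ∑ t, P b t * y t := by
          rw [Finset.sum_mul, ← Finset.sum_sub_distrib]
          congr 1; funext t; ring
        rw [this, hP1, ← heqb, hyb]; ring
      have hterm : ∀ t ∈ Finset.univ, P b t * (y s0 - y t) = 0 := by
        rw [← Finset.sum_eq_zero_iff_of_nonneg]
        · exact hsum
        · intro t _
          exact mul_nonneg (hP0 b t) (sub_nonneg.mpr (hmax t (mem_univ _)))
      have := hterm c (mem_univ _)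
      rcases mul_eq_zero.mp this with h0 | h0
      · exact absurd h0 (ne_of_gt hstep)
      · linarith [sub_eq_zero.mp h0]
  have hs0Z : s0 ∉ {u | ∀ g ∈ G, ¬ Relation.ReflTransGen (fun a b => 0 < P a b) u g} :=
    fun hb => by simp [hZy s0 hb] at hs0pos
  simp only [Set.mem_setOf_eq, not_forall] at hs0Z
  obtain ⟨g, hg, hreach⟩ := hs0Z
  rw [not_not] at hreach
  have := key g hreach
  rw [hGy g hg] at this
  linarith

private noncomputable def mcSysMap {S : Type*} [Fintype S] (P : S → S → ℝ) (A : Set S) :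
    (S → ℝ) →ₗ[ℝ] (S → ℝ) where
  toFun x s := if s ∈ A then x s else x s - ∑ t, P s t * x t
  map_add' x y := by
    funext s
    by_cases h : s ∈ A
    · simp [h]
    · simp only [if_neg h, Pi.add_apply]
      rw [show (∑ t, P s t * (x t + y t)) = (∑ t, P s t * x t) + ∑ t, P s t * y t by
        rw [← Finset.sum_add_distrib]; congr 1; funext t; ring]
      ring
  map_smul' c x := by
    funext s
    by_cases h : s ∈ A
    · simp [h]
    · simp only [if_neg h, Pi.smul_apply, smul_eq_mul, RingHom.id_apply]
      rw [show (∑ t, P s t * (c * x t)) = c * ∑ t, P s t * x t by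
        rw [Finset.mul_sum]; congr 1; funext t; ring]
      ring

theorem reachability_linear_system_unique_solution {S : Type*} [Fintype S]
    (P : S → S → ℝ) (hP0 : ∀ s t, 0 ≤ P s t) (hP1 : ∀ s, ∑ t, P s t = 1)
    (G : Set S) :
    ∃! x : S → ℝ,
      (∀ s ∈ G, x s = 1) ∧
      (∀ s ∈ {u | ∀ g ∈ G, ¬ Relation.ReflTransGen (fun a b => 0 < P a b) u g},
        x s = 0) ∧
      (∀ s ∉ G ∪ {u | ∀ g ∈ G, ¬ Relation.ReflTransGen (fun a b => 0 < P a b) u g},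
        x s = ∑ t, P s t * x t) := by
  set Z : Set S := {u | ∀ g ∈ G, ¬ Relation.ReflTransGen (fun a b => 0 < P a b) u g} with hZdef
  set A : Set S := G ∪ Z with hAdef
  have hGZ : ∀ s ∈ G, s ∉ Z := by
    intro s hs hsZ
    exact hsZ s hs Relation.ReflTransGen.refl
  -- homogeneous solutions are zero
  have hzero : ∀ y : S → ℝ, (∀ s ∈ G, y s = 0) → (∀ s ∈ Z, y s = 0) →
      (∀ s ∉ A, y s = ∑ t, P s t * y t) → y = 0 := by
    intro y h1 h2 h3
    have hle := mc_max_principle P hP0 hP1 G y h1 h2 h3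
    have hge := mc_max_principle P hP0 hP1 G (-y)
      (fun s hs => by simp [h1 s hs]) (fun s hs => by simp [h2 s hs])
      (fun s hs => by
        simp only [Pi.neg_apply]
        rw [h3 s hs, ← Finset.sum_neg_distrib]
        congr 1; funext t; ring)
    funext s
    have := hge s
    simp only [Pi.neg_apply, Pi.zero_apply] at this ⊢
    linarith [hle s]
  have hinj : Function.Injective (mcSysMap P A) := by
    rw [← LinearMap.ker_eq_bot, LinearMap.ker_eq_bot']
    intro y hy
    apply hzero y
    · intro s hs
      have := congrFun hy s
      simpa [mcSysMap, hAdef, hs, Set.mem_union_left _ hs] using this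
    · intro s hs
      have := congrFun hy s
      simpa [mcSysMap, hAdef, hs, Set.mem_union_right _ hs] using this
    · intro s hs
      have := congrFun hy s
      simp only [mcSysMap, LinearMap.coe_mk, AddHom.coe_mk, Pi.zero_apply, if_neg hs] at this
      linarith
  have hsurj : Function.Surjective (mcSysMap P A) :=
    (LinearMap.injective_iff_surjective).mp hinj
  obtain ⟨x0, hx0⟩ := hsurj (fun s => if s ∈ G then 1 else 0)
  have hx0' : ∀ s, (if s ∈ A then x0 s else x0 s - ∑ t, P s t * x0 t)
      = (if s ∈ G then 1 else 0) := fun s => by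
    have := congrFun hx0 s
    simp only [mcSysMap, LinearMap.coe_mk, AddHom.coe_mk] at this
    convert this
  refine ⟨x0, ⟨?_, ?_, ?_⟩, ?_⟩
  · intro s hs
    have := hx0' s
    rwa [if_pos (Set.mem_union_left _ hs), if_pos hs] at this
  · intro s hs
    have := hx0' s
    have hsG : s ∉ G := fun h => hGZ s h hs
    rwa [if_pos (Set.mem_union_right _ hs), if_neg hsG] at this
  · intro s hs
    have := hx0' s
    have hsG : s ∉ G := fun h => hs (Set.mem_union_left _ h)
    rw [if_neg hs, if_neg hsG] at this
    linarith
  · intro x ⟨h1, h2, h3⟩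
    have hdiff : (x - x0) = 0 := by
      apply hzero
      · intro s hs
        have e1 := h1 s hs
        have e2 : x0 s = 1 := by
          have := hx0' s
          rwa [if_pos (Set.mem_union_left _ hs), if_pos hs] at this
        simp [e1, e2]
      · intro s hs
        have e1 := h2 s hs
        have e2 : x0 s = 0 := by
          have := hx0' s
          have hsG : s ∉ G := fun h => hGZ s h hs
          rwa [if_pos (Set.mem_union_right _ hs), if_neg hsG] at this
        simp [e1, e2]
      · intro s hs
        have e1 := h3 s hs
        have e2 : x0 s = ∑ t, P s t * x0 t := by
          have := hx0' s
          have hsG : s ∉ G := fun h => hs (Set.mem_union_left _ h)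
          rw [if_neg hs, if_neg hsG] at this
          linarith
        simp only [Pi.sub_apply]
        rw [e1, e2, ← Finset.sum_sub_distrib]
        congr 1; funext t; ring
    funext s
    have := congrFun hdiff s
    simp only [Pi.sub_apply, Pi.zero_apply] at this
    linarith
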